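/- Let r and s be coprime integers with 2 ≤ r < s, g = (r−1)(s−1)/2, N the increasing enumeration of the numerical semigroup generated by r and s, and Λ_i = g − N(i−1) + (i−1) for i = 1, …, g. Fix k with 0 ≤ k < g, let n_k = #{ℓ ∈ ℕ : N(ℓ) ≤ g−k−1}, and let (a_1, …, a_{n_k}; b_1, …, b_{n_k}) be the Frobenius characteristics of the truncated partition Λ^{[k]} = (Λ_{k+1}, …, Λ_g). Then for every i = 1, …, n_k there exists a unique integer ℓ_i with k+1 ≤ ℓ_i ≤ g such that Λ_{ℓ_i} + g − ℓ_i = a_i + b_i + 1; moreover ℓ_{n_k} = k+1, i.e. a_{n_k} + b_{n_k} + 1 = Λ_{k+1} + g − k − 1. -/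

import Mathlib

/-- Membership in the numerical semigroup generated by `r` and `s`. -/
def inSg (r s n : ℕ) : Prop := ∃ a b : ℕ, n = a * r + b * s

/-- The Young diagram row lengths `Λ i = g - N(i-1) + (i-1)` attached to the
Weierstrass gap sequence. -/
def Lam (g : ℕ) (N : ℕ → ℕ) (i : ℕ) : ℕ := g + (i - 1) - N (i - 1)

/-- `nkDef g k N = #{ℓ : N ℓ ≤ g - k - 1}`. -/
noncomputable def nkDef (g k : ℕ) (N : ℕ → ℕ) : ℕ :=
  Set.ncard {ℓ : ℕ | N ℓ ≤ g - k - 1}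

/-- The parts of the truncated partition `Λ^{[k]} = (Λ_{k+1}, …, Λ_g)`
(zero beyond the `(g-k)`-th part). -/
def muTr (g k : ℕ) (N : ℕ → ℕ) (j : ℕ) : ℕ :=
  if k + j ≤ g then Lam g N (k + j) else 0

/-- The conjugate partition of `Λ^{[k]}`: `μ'_j = #{i : μ_i ≥ j}`. -/
def muConj (g k : ℕ) (N : ℕ → ℕ) (j : ℕ) : ℕ :=
  ((Finset.Icc 1 (g - k)).filter (fun i => j ≤ muTr g k N i)).card

/-- The arm coordinates `a_i = μ'_{ρ+1-i} - (ρ+1-i)` of the Frobenius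
characteristics of `Λ^{[k]}`, with `ρ = n_k`. -/
noncomputable def aChar (g k : ℕ) (N : ℕ → ℕ) (i : ℕ) : ℕ :=
  muConj g k N (nkDef g k N + 1 - i) - (nkDef g k N + 1 - i)

/-- The leg coordinates `b_i = μ_{ρ+1-i} - (ρ+1-i)` of the Frobenius
characteristics of `Λ^{[k]}`, with `ρ = n_k`. -/
noncomputable def bChar (g k : ℕ) (N : ℕ → ℕ) (i : ℕ) : ℕ :=
  muTr g k N (nkDef g k N + 1 - i) - (nkDef g k N + 1 - i)

/-- For each `i = 1, …, n_k` there is a unique `ℓ_i ∈ {k+1, …, g}` with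
`Λ_{ℓ_i} + g - ℓ_i = a_i + b_i + 1`; moreover `ℓ_{n_k} = k + 1`. -/
lemma inSg_add {r s x y : ℕ} (hx : inSg r s x) (hy : inSg r s y) : inSg r s (x + y) := by
  obtain ⟨a, b, rfl⟩ := hx; obtain ⟨c, d, rfl⟩ := hy
  exact ⟨a + c, b + d, by ring⟩

lemma notF {r s : ℕ} (hr : 2 ≤ r) (hrs : r < s) (hco : Nat.Coprime r s) :
    ¬ inSg r s (r * s - r - s) := by
  rintro ⟨a, b, hab⟩
  have h2s : 2 * s ≤ r * s := Nat.mul_le_mul_right s hr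
  have hsum : (a + 1) * r + (b + 1) * s = r * s := by
    have e1 : (a+1)*r = a*r + r := by ring
    have e2 : (b+1)*s = b*s + s := by ring
    omega
  have hdvd : s ∣ (a + 1) * r := by
    have h1 : s ∣ r * s := ⟨r, mul_comm r s⟩
    have h2 : s ∣ (b + 1) * s := ⟨b + 1, mul_comm _ _⟩
    have : (a+1)*r = r*s - (b+1)*s := by omega
    rw [this]; exact Nat.dvd_sub h1 h2
  have hdvd2 : s ∣ a + 1 := (Nat.Coprime.dvd_of_dvd_mul_right hco.symm) hdvd
  have hle : s ≤ a + 1 := Nat.le_of_dvd (by omega) hdvd2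
  have : s * r ≤ (a + 1) * r := Nat.mul_le_mul_right r hle
  have hsr : s * r = r * s := mul_comm s r
  have : 1 * s ≤ (b + 1) * s := Nat.mul_le_mul_right s (by omega)
  omega

lemma symB {r s x : ℕ} (hr : 2 ≤ r) (hrs : r < s) (hco : Nat.Coprime r s)
    (hx : x ≤ r * s - r - s) (hnx : ¬ inSg r s x) : inSg r s (r * s - r - s - x) := by
  haveI : NeZero s := ⟨by omega⟩
  set u : ZMod s := (x : ZMod s) * (r : ZMod s)⁻¹ with hu
  set a : ℕ := u.val with ha
  have has : a < s := ZMod.val_lt u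
  have hunit : IsUnit (r : ZMod s) := by
    rw [ZMod.isUnit_iff_coprime]; exact hco
  have hcast : ((a * r : ℕ) : ZMod s) = (x : ZMod s) := by
    push_cast
    rw [ha, ZMod.natCast_val, ZMod.cast_id, hu, mul_assoc, ZMod.inv_mul_of_unit _ hunit, mul_one]
  have hmod : a * r ≡ x [MOD s] := (ZMod.natCast_eq_natCast_iff _ _ _).mp hcast
  by_cases hle : a * r ≤ x
  · exfalso
    have hdvd : s ∣ x - a * r := (Nat.modEq_iff_dvd' hle).mp hmod
    obtain ⟨b, hb⟩ := hdvd
    have e0 : s * b = b * s := mul_comm s b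
    exact hnx ⟨a, b, by omega⟩
  · push_neg at hle
    have hdvd : s ∣ a * r - x := (Nat.modEq_iff_dvd' (le_of_lt hle)).mp hmod.symm
    have hpos : 0 < a * r - x := by omega
    have hges : s ≤ a * r - x := Nat.le_of_dvd hpos hdvd
    have hdvd2 : s ∣ a * r - x - s := Nat.dvd_sub hdvd dvd_rfl
    obtain ⟨b, hb⟩ := hdvd2
    refine ⟨s - 1 - a, b, ?_⟩
    have e1 : (s - 1 - a) * r + a * r = (s - 1) * r := by
      rw [← Nat.add_mul]; congr 1; omega
    have e2 : (s - 1) * r + r = s * r := by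
      rw [← Nat.succ_mul]; congr 1; omega
    have e3 : s * r = r * s := mul_comm s r
    have e4 : s * b = b * s := mul_comm s b
    have h2s : 2 * s ≤ r * s := Nat.mul_le_mul_right s hr
    omega

lemma count_below {r s : ℕ} {N : ℕ → ℕ} [DecidablePred (inSg r s)]
    (hmono : StrictMono N) (hmem : ∀ n, inSg r s (N n))
    (hsurj : ∀ m, inSg r s m → ∃ n, N n = m) (n : ℕ) :
    ((Finset.range (N n)).filter (inSg r s)).card = n := by
  have himg : (Finset.range n).image N = (Finset.range (N n)).filter (inSg r s) := by
    ext x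
    simp only [Finset.mem_image, Finset.mem_range, Finset.mem_filter]
    constructor
    · rintro ⟨m, hm, rfl⟩; exact ⟨hmono hm, hmem m⟩
    · rintro ⟨hx, hxS⟩
      obtain ⟨t, rfl⟩ := hsurj x hxS
      exact ⟨t, hmono.lt_iff_lt.mp hx, rfl⟩
  rw [← himg, Finset.card_image_of_injective _ hmono.injective, Finset.card_range]

lemma count_iff {r s : ℕ} {N : ℕ → ℕ} [DecidablePred (inSg r s)]
    (hmono : StrictMono N) (hmem : ∀ n, inSg r s (N n))
    (hsurj : ∀ m, inSg r s m → ∃ n, N n = m) (M c : ℕ)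
    (hc : ((Finset.range M).filter (inSg r s)).card = c) (ℓ : ℕ) :
    N ℓ < M ↔ ℓ < c := by
  constructor
  · intro h
    have hsub : insert (N ℓ) ((Finset.range (N ℓ)).filter (inSg r s))
        ⊆ (Finset.range M).filter (inSg r s) := by
      intro x hx
      rcases Finset.mem_insert.mp hx with rfl | hx
      · exact Finset.mem_filter.mpr ⟨Finset.mem_range.mpr h, hmem ℓ⟩
      · rcases Finset.mem_filter.mp hx with ⟨hx1, hx2⟩
        exact Finset.mem_filter.mpr ⟨Finset.mem_range.mpr (lt_trans (Finset.mem_range.mp hx1) h), hx2⟩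
    have hni : N ℓ ∉ (Finset.range (N ℓ)).filter (inSg r s) := by
      simp [Finset.mem_filter]
    have := Finset.card_le_card hsub
    rw [Finset.card_insert_of_notMem hni, count_below hmono hmem hsurj] at this
    omega
  · intro h
    by_contra h'
    push_neg at h'
    have hsub : (Finset.range M).filter (inSg r s) ⊆ (Finset.range (N ℓ)).filter (inSg r s) := by
      apply Finset.filter_subset_filter
      exact Finset.range_subset_range.mpr h'
    have := Finset.card_le_card hsub
    rw [count_below hmono hmem hsurj, hc] at this
    omega

lemma sym_count {r s : ℕ} [DecidablePred (inSg r s)]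
    (hr : 2 ≤ r) (hrs : r < s) (hco : Nat.Coprime r s) (A : ℕ)
    (hA : A ≤ r * s - r - s + 1) :
    ((Finset.Ico A (r * s - r - s + 1)).filter (inSg r s)).card
      = ((Finset.range (r * s - r - s + 1 - A)).filter (fun x => ¬ inSg r s x)).card := by
  set F := r * s - r - s with hF
  apply Finset.card_bij' (fun x _ => F - x) (fun y _ => F - y)
  · intro x hx
    rcases Finset.mem_filter.mp hx with ⟨hx1, hx2⟩
    rcases Finset.mem_Ico.mp hx1 with ⟨hx3, hx4⟩
    refine Finset.mem_filter.mpr ⟨Finset.mem_range.mpr (by omega), ?_⟩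
    intro hcon
    have : inSg r s F := by
      have : x + (F - x) = F := by omega
      rw [← this]; exact inSg_add hx2 hcon
    exact notF hr hrs hco this
  · intro y hy
    rcases Finset.mem_filter.mp hy with ⟨hy1, hy2⟩
    have hy3 := Finset.mem_range.mp hy1
    refine Finset.mem_filter.mpr ⟨Finset.mem_Ico.mpr ⟨by omega, by omega⟩, ?_⟩
    exact symB hr hrs hco (by omega) hy2
  · intro x hx
    rcases Finset.mem_filter.mp hx with ⟨hx1, _⟩
    rcases Finset.mem_Ico.mp hx1 with ⟨_, hx4⟩
    omega
  · intro y hy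
    rcases Finset.mem_filter.mp hy with ⟨hy1, _⟩
    have := Finset.mem_range.mp hy1
    omega

lemma split_card {r s : ℕ} [DecidablePred (inSg r s)] (M : ℕ) :
    ((Finset.range M).filter (inSg r s)).card
      + ((Finset.range M).filter (fun x => ¬ inSg r s x)).card = M := by
  have h := Finset.card_filter_add_card_filter_not
    (s := Finset.range M) (p := inSg r s)
  rw [Finset.card_range] at h
  convert h using 3

theorem frobenius_hook_indices (r s g : ℕ) (N : ℕ → ℕ)
    (hr : 2 ≤ r) (hrs : r < s) (hco : Nat.Coprime r s)
    (hg : 2 * g = (r - 1) * (s - 1))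
    (hmono : StrictMono N)
    (hmem : ∀ n, inSg r s (N n))
    (hsurj : ∀ m, inSg r s m → ∃ n, N n = m)
    (k : ℕ) (hk : k < g) :
    (∀ i : ℕ, 1 ≤ i → i ≤ nkDef g k N →
      ∃! ℓ : ℕ, k + 1 ≤ ℓ ∧ ℓ ≤ g ∧
        Lam g N ℓ + g - ℓ = aChar g k N i + bChar g k N i + 1) ∧
    aChar g k N (nkDef g k N) + bChar g k N (nkDef g k N) + 1
      = Lam g N (k + 1) + g - (k + 1) := by
  classical
  -- arithmetic on F = r*s - r - s = 2g - 1
  have e0 : (r - 1) * (s - 1) + r + s = r * s + 1 := by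
    have h1 : 1 ≤ r := by omega
    have h2 : 1 ≤ s := by omega
    zify [h1, h2]; ring
  have h2s : 2 * s ≤ r * s := Nat.mul_le_mul_right s hr
  have hg1 : 1 ≤ g := by omega
  have hF : r * s - r - s = 2 * g - 1 := by omega
  -- total count: |S ∩ [0, 2g)| = g
  have cardT2 : ((Finset.range (2 * g)).filter (inSg r s)).card = g := by
    have h0 := sym_count hr hrs hco 0 (by omega)
    rw [← Finset.range_eq_Ico] at h0
    have hsplit := split_card (r := r) (s := s) (r * s - r - s + 1)
    have e1 : r * s - r - s + 1 = 2 * g := by omega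
    rw [e1] at h0 hsplit
    rw [Nat.sub_zero] at h0
    omega
  have hNiff : ∀ ℓ, N ℓ < 2 * g ↔ ℓ < g :=
    count_iff hmono hmem hsurj (2 * g) g cardT2
  have hN0 : N 0 = 0 := by
    obtain ⟨t, ht⟩ := hsurj 0 ⟨0, 0, by ring⟩
    have := hmono.monotone (Nat.zero_le t)
    omega
  have haddle : ∀ a d : ℕ, N a + d ≤ N (a + d) := by
    intro a d
    induction d with
    | zero => simp
    | succ d ih =>
      have h1 : N (a + d) < N (a + d + 1) := hmono (by omega)
      have h2 : N (a + (d + 1)) = N (a + d + 1) := rfl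
      omega
  -- q = n_k
  set q := ((Finset.range (g - k)).filter (inSg r s)).card with hq
  have hqiff : ∀ ℓ, N ℓ < g - k ↔ ℓ < q :=
    count_iff hmono hmem hsurj (g - k) q rfl
  have hnk : nkDef g k N = q := by
    have hset : {ℓ : ℕ | N ℓ ≤ g - k - 1} = ↑(Finset.range q) := by
      ext ℓ
      simp only [Set.mem_setOf_eq, Finset.coe_range, Set.mem_Iio]
      rw [← hqiff ℓ]; omega
    rw [nkDef, hset, Set.ncard_coe_finset, Finset.card_range]
  have hq1 : 1 ≤ q := by
    have := (hqiff 0).mp (by omega)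
    omega
  have hqm : q ≤ g - k := by
    rw [hq]
    exact le_trans (Finset.card_filter_le _ _) (le_of_eq (Finset.card_range _))
  -- count below g+k : k + q
  have hmid : ((Finset.Ico (g + k) (2 * g)).filter (inSg r s)).card
      = ((Finset.range (g - k)).filter (fun x => ¬ inSg r s x)).card := by
    have h0 := sym_count hr hrs hco (g + k) (by omega)
    have e1 : r * s - r - s + 1 = 2 * g := by omega
    rw [e1, show 2 * g - (g + k) = g - k from by omega] at h0
    exact h0
  have hnegcard : ((Finset.range (g - k)).filter (fun x => ¬ inSg r s x)).card
      = (g - k) - q := by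
    have hsplit := split_card (r := r) (s := s) (g - k)
    omega
  have hsplit2 : ((Finset.range (g + k)).filter (inSg r s)).card = k + q := by
    have hunion : Finset.range (g + k) ∪ Finset.Ico (g + k) (2 * g) = Finset.range (2 * g) := by
      rw [Finset.range_eq_Ico, Finset.range_eq_Ico]
      exact Finset.Ico_union_Ico_eq_Ico (by omega) (by omega)
    have hdisj : Disjoint (Finset.range (g + k)) (Finset.Ico (g + k) (2 * g)) := by
      rw [Finset.range_eq_Ico]
      exact Finset.Ico_disjoint_Ico_consecutive 0 (g + k) (2 * g)
    have h3 : ((Finset.range (g + k)).filter (inSg r s)).card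
        + ((Finset.Ico (g + k) (2 * g)).filter (inSg r s)).card = g := by
      rw [← Finset.card_union_of_disjoint
        (Finset.disjoint_filter_filter hdisj), ← Finset.filter_union, hunion, cardT2]
    omega
  have hρkiff : ∀ ℓ, N ℓ < g + k ↔ ℓ < k + q :=
    count_iff hmono hmem hsurj (g + k) (k + q) hsplit2
  -- N ℓ ≤ g + ℓ - 1 for ℓ < g
  have hNle : ∀ ℓ, ℓ < g → N ℓ + 1 ≤ g + ℓ := by
    intro ℓ hℓ
    have h2g : N ℓ < 2 * g := (hNiff ℓ).mpr hℓ
    have hcl := count_below hmono hmem hsurj ℓ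
    have hsum := split_card (r := r) (s := s) (N ℓ)
    have hsum2 := split_card (r := r) (s := s) (2 * g)
    rw [hcl] at hsum
    rw [cardT2] at hsum2
    have hFns : (2 * g - 1) ∈ (Finset.range (2 * g)).filter (fun x => ¬ inSg r s x) := by
      refine Finset.mem_filter.mpr ⟨Finset.mem_range.mpr (by omega), ?_⟩
      have := notF hr hrs hco
      rwa [hF] at this
    have hsub : (Finset.range (N ℓ)).filter (fun x => ¬ inSg r s x)
        ⊆ ((Finset.range (2 * g)).filter (fun x => ¬ inSg r s x)).erase (2 * g - 1) := by
      intro x hx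
      rcases Finset.mem_filter.mp hx with ⟨h1, h2⟩
      have h1 := Finset.mem_range.mp h1
      exact Finset.mem_erase.mpr ⟨by omega,
        Finset.mem_filter.mpr ⟨Finset.mem_range.mpr (by omega), h2⟩⟩
    have hcard := Finset.card_le_card hsub
    rw [Finset.card_erase_of_mem hFns] at hcard
    omega
  -- basic facts about the truncated partition
  have hμ : ∀ j, 1 ≤ j → j ≤ g - k → N (k + j - 1) + muTr g k N j = g + k + j - 1 := by
    intro j h1 h2
    have hkj : k + j ≤ g := by omega
    have hle := hNle (k + j - 1) (by omega)
    rw [muTr, if_pos hkj, Lam]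
    omega
  have hμdec : ∀ i j, 1 ≤ i → i ≤ j → j ≤ g - k → muTr g k N j ≤ muTr g k N i := by
    intro i j h1 h2 h3
    have hi := hμ i h1 (by omega)
    have hj := hμ j (by omega) h3
    have hadd := haddle (k + i - 1) (j - i)
    have e : k + i - 1 + (j - i) = k + j - 1 := by omega
    rw [e] at hadd
    omega
  have hμq : q ≤ muTr g k N q := by
    have h1 := hμ q hq1 hqm
    have h2 : N (k + q - 1) < g + k := (hρkiff (k + q - 1)).mpr (by omega)
    omega
  have hμpos : ∀ i, 1 ≤ i → i ≤ g - k → 1 ≤ muTr g k N i := by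
    intro i h1 h2
    have h3 := hμ i h1 h2
    have hle := hNle (k + i - 1) (by omega)
    omega
  have hμ'le : ∀ j, muConj g k N j ≤ g - k := by
    intro j
    rw [muConj]
    refine le_trans (Finset.card_filter_le _ _) ?_
    rw [Nat.card_Icc]; omega
  have hμ'1 : muConj g k N 1 = g - k := by
    rw [muConj, Finset.filter_true_of_mem, Nat.card_Icc]
    · omega
    · intro i hi
      rcases Finset.mem_Icc.mp hi with ⟨h1, h2⟩
      exact hμpos i h1 h2
  have hμ'ge : ∀ j, 1 ≤ j → j ≤ q → q ≤ muConj g k N j := by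
    intro j h1 h2
    rw [muConj]
    have hsub : Finset.Icc 1 q ⊆ (Finset.Icc 1 (g - k)).filter (fun i => j ≤ muTr g k N i) := by
      intro i hi
      rcases Finset.mem_Icc.mp hi with ⟨hi1, hi2⟩
      refine Finset.mem_filter.mpr ⟨Finset.mem_Icc.mpr ⟨hi1, by omega⟩, ?_⟩
      have := hμdec i q hi1 hi2 hqm
      omega
    have := Finset.card_le_card hsub
    rw [Nat.card_Icc] at this
    omega
  -- the key non-coincidence lemma
  have hkey : ∀ i j, 1 ≤ i → i ≤ g - k → 1 ≤ j →
      muTr g k N i + muConj g k N j ≠ i + j - 1 := by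
    intro i j hi1 hi2 hj1 heq
    have hcc : muConj g k N j
        = ((Finset.Icc 1 (g - k)).filter (fun i' => j ≤ muTr g k N i')).card := rfl
    by_cases hcase : j ≤ muTr g k N i
    · have hsub : Finset.Icc 1 i ⊆ (Finset.Icc 1 (g - k)).filter (fun i' => j ≤ muTr g k N i') := by
        intro i' hi'
        rcases Finset.mem_Icc.mp hi' with ⟨h1, h2⟩
        refine Finset.mem_filter.mpr ⟨Finset.mem_Icc.mpr ⟨h1, by omega⟩, ?_⟩
        have := hμdec i' i h1 h2 hi2
        omega
      have hc := Finset.card_le_card hsub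
      rw [Nat.card_Icc, ← hcc] at hc
      omega
    · push_neg at hcase
      have hsub : (Finset.Icc 1 (g - k)).filter (fun i' => j ≤ muTr g k N i')
          ⊆ Finset.Icc 1 (i - 1) := by
        intro i' hi'
        rcases Finset.mem_filter.mp hi' with ⟨h1, h2⟩
        rcases Finset.mem_Icc.mp h1 with ⟨h3, h4⟩
        refine Finset.mem_Icc.mpr ⟨h3, ?_⟩
        by_contra hcon
        push_neg at hcon
        have := hμdec i i' hi1 (by omega) h4
        omega
      have hc := Finset.card_le_card hsub
      rw [Nat.card_Icc, ← hcc] at hc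
      omega
  constructor
  · -- main part
    intro i hi1 hi2
    rw [hnk] at hi2
    set j := q + 1 - i with hjdef
    have hj1 : 1 ≤ j := by omega
    have hjq : j ≤ q := by omega
    have hjm : j ≤ g - k := by omega
    have haval : aChar g k N i = muConj g k N j - j := by
      simp only [aChar, hnk, ← hjdef]
    have hbval : bChar g k N i = muTr g k N j - j := by
      simp only [bChar, hnk, ← hjdef]
    have hμj_ge : j ≤ muTr g k N j := by
      have := hμdec j q hj1 hjq hqm
      omega
    have hμ'j_ge : j ≤ muConj g k N j := by
      have := hμ'ge j hj1 hjq
      omega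
    have hμ'jle := hμ'le j
    set c := (g - k) + j - 1 - muConj g k N j with hcdef
    have hj' := hμ j hj1 hjm
    -- c is in the semigroup
    have hcS : inSg r s c := by
      by_contra hnc
      have hFc := symB hr hrs hco (x := c) (by omega) hnc
      rw [hF] at hFc
      obtain ⟨t, ht⟩ := hsurj _ hFc
      have htg : t < g := (hNiff t).mp (by omega)
      have hNt : N t = 2 * g - 1 - c := ht
      -- N t > N (k+j-1), so t ≥ k + j > k
      have hNtlarge : N (k + j - 1) < N t := by omega
      have htlarge : k + j - 1 < t := hmono.lt_iff_lt.mp hNtlarge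
      set i' := t - k + 1 with hi'def
      have hi'1 : 1 ≤ i' := by omega
      have hi'm : i' ≤ g - k := by omega
      have hi'eq := hμ i' hi'1 hi'm
      have e : k + i' - 1 = t := by omega
      rw [e] at hi'eq
      exact hkey i' j hi'1 hi'm hj1 (by omega)
    have hxS : inSg r s (N (k + j - 1) + c) := inSg_add (hmem _) hcS
    obtain ⟨t, ht⟩ := hsurj _ hxS
    have hNkj : N (k + j - 1) < g + k := by omega
    have hlt2g : N (k + j - 1) + c < 2 * g - 1 := by omega
    have htg : t < g := (hNiff t).mp (by omega)
    have htk : k + j - 1 ≤ t := hmono.le_iff_le.mp (by omega)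
    have hNtle := hNle t htg
    have hLam : Lam g N (t + 1) = g + t - N t := by
      rw [Lam, Nat.add_sub_cancel]
    have hval : Lam g N (t + 1) + g - (t + 1) = aChar g k N i + bChar g k N i + 1 := by
      rw [hLam, haval, hbval]
      omega
    refine ⟨t + 1, ⟨⟨by omega, by omega, hval⟩, ?_⟩⟩
    rintro y ⟨hy1, hy2, hy3⟩
    have hy0 : y - 1 < g := by omega
    have hyle := hNle (y - 1) hy0
    have hLamy : Lam g N y = g + (y - 1) - N (y - 1) := rfl
    rw [hval.symm, hLamy, hLam] at hy3
    have hNeq : N (y - 1) = N t := by omega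
    have := hmono.injective hNeq
    omega
  · -- the moreover part
    have haval : aChar g k N (nkDef g k N) = muConj g k N 1 - 1 := by
      simp only [aChar, hnk]
      rw [show q + 1 - q = 1 from by omega]
    have hbval : bChar g k N (nkDef g k N) = muTr g k N 1 - 1 := by
      simp only [bChar, hnk]
      rw [show q + 1 - q = 1 from by omega]
    have h1 := hμ 1 le_rfl (by omega)
    rw [Nat.add_sub_cancel] at h1
    have hNk := hNle k hk
    have hLam1 : Lam g N (k + 1) = g + k - N k := by
      rw [Lam, Nat.add_sub_cancel]
    rw [haval, hbval, hμ'1, hLam1]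
    have hpos := hμpos 1 le_rfl (by omega)
    omega
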